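/- Let Σ be a real symmetric matrix indexed by {∞x, ∞y, 0, 1, x, y, z} such that (writing rows p ∈ {∞x,∞y,0,1} and columns e ∈ {x,y,z}): the coordinate block has pattern Σ_{∞x,·} = (*,0,0), Σ_{∞y,·} = (0,*,0), Σ_{0,·} = (0,0,*), Σ_{1,·} = (*,*,*) with * denoting nonzero entries; Σ_{∞x,∞y} = Σ_{∞x,0} = Σ_{∞y,0} = 0; Σ_{∞x,1}, Σ_{∞y,1}, Σ_{0,1} are nonzero; and Σ is positive semidefinite. If moreover for every pair a ≠ b among {∞x,∞y,0,1} and every subset L ⊆ {x,y,z} with det Σ_L ≠ 0 and rank Σ_L = rank Σ_{xyz} the almost-principal minor det Σ_{aL,bL} vanishes exactly when Σ_{ab} should encode ⟨a,b⟩ (in particular det Σ_{0L,1L} = 0 while Σ_{0,1} ≠ 0), then the 3×3 block Σ_{xyz} is invertible. -/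

import Mathlib

open Matrix

private lemma psd_entry_zero {n : Type*} [Fintype n] [DecidableEq n]
    {A : Matrix n n ℝ} (h : A.PosSemidef) {i j : n} (hjj : A j j = 0) :
    A i j = 0 := by
  by_contra hne
  have hsym : A j i = A i j := by
    have := congrFun (congrFun h.1 j) i
    simpa using this.symm
  set t : ℝ := -(A i i + 1) / (2 * A i j) with ht
  have h2 := (posSemidef_iff_dotProduct_mulVec.mp h).2 (Pi.single i 1 + Pi.single j t)
  simp only [star_trivial, mulVec_add, dotProduct_add, add_dotProduct,
    mulVec_single, single_dotProduct] at h2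
  simp only [Pi.smul_apply, col_apply, op_smul_eq_mul, mul_one] at h2
  rw [hjj, hsym] at h2
  have htv : t * A i j = -(A i i + 1) / 2 := by
    rw [ht]; field_simp
  nlinarith [h2, htv]

private lemma rank_le_of_det_eq_zero' {n : ℕ} {M : Matrix (Fin (n+1)) (Fin (n+1)) ℝ}
    (h : M.det = 0) : M.rank ≤ n := by
  obtain ⟨v, hv, hMv⟩ := (Matrix.exists_mulVec_eq_zero_iff (A := ℝ)).mpr h
  have hker : 0 < Module.finrank ℝ (LinearMap.ker M.mulVecLin) := by
    have : Nontrivial (LinearMap.ker M.mulVecLin) := by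
      refine nontrivial_of_ne ⟨v, ?_⟩ 0 ?_
      · simpa [Matrix.mulVecLin_apply] using hMv
      · simp [Subtype.ext_iff, hv]
    exact Module.finrank_pos
  have hrn := M.mulVecLin.finrank_range_add_finrank_ker
  have hdim : Module.finrank ℝ (Fin (n+1) → ℝ) = n + 1 := by
    simp [Module.finrank_pi]
  rw [hdim] at hrn
  have : M.rank = Module.finrank ℝ (LinearMap.range M.mulVecLin) := rfl
  omega

private lemma rank_submatrix_le'' {l m : Type*} [Fintype l] [Fintype m] [DecidableEq l]
    [DecidableEq m] (A : Matrix m m ℝ) (f : l → m) : (A.submatrix f f).rank ≤ A.rank := by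
  have h1 : (1 : Matrix m m ℝ).submatrix f (Equiv.refl m) *
      (A * (1 : Matrix m m ℝ).submatrix (Equiv.refl m) f) = A.submatrix f f := by
    rw [mul_submatrix_one, one_submatrix_mul]
    simp [submatrix_submatrix]
  rw [← h1]
  exact le_trans (rank_mul_le_right _ _) (rank_mul_le_left _ _)

private lemma rank_pos_of_ne' {l m : Type*} [Fintype l] [Fintype m] [DecidableEq m]
    {M : Matrix l m ℝ} {i : l} {j : m} (h : M i j ≠ 0) : 1 ≤ M.rank := by
  rw [Nat.one_le_iff_ne_zero]
  intro h0
  have hbot : LinearMap.range M.mulVecLin = ⊥ := by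
    rwa [Matrix.rank, Submodule.finrank_eq_zero] at h0
  have hz : M.mulVecLin (Pi.single j 1) = 0 := by
    rw [show M.mulVecLin = 0 from LinearMap.range_eq_bot.mp hbot]; simp
  have := congrFun hz i
  simp [Matrix.mulVecLin_apply, Matrix.mulVec_single] at this
  exact h this

private def eL3 : Fin 3 ≃ {x // x ∈ ({4,5,6} : Finset (Fin 7))} :=
  ⟨![⟨4, by decide⟩, ⟨5, by decide⟩, ⟨6, by decide⟩],
   fun z => if (z : Fin 7) = 4 then 0 else if (z : Fin 7) = 5 then 1 else 2,
   by decide, by decide⟩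

private def eL45 : Fin 2 ≃ {x // x ∈ ({4,5} : Finset (Fin 7))} :=
  ⟨![⟨4, by decide⟩, ⟨5, by decide⟩], fun z => if (z : Fin 7) = 4 then 0 else 1,
   by decide, by decide⟩

private def eL46 : Fin 2 ≃ {x // x ∈ ({4,6} : Finset (Fin 7))} :=
  ⟨![⟨4, by decide⟩, ⟨6, by decide⟩], fun z => if (z : Fin 7) = 4 then 0 else 1,
   by decide, by decide⟩

private def eL5 : Fin 1 ≃ {x // x ∈ ({5} : Finset (Fin 7))} :=
  ⟨![⟨5, by decide⟩], fun _ => 0, by decide, by decide⟩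

private def gL45 : Fin 3 ≃ Option {x // x ∈ ({4,5} : Finset (Fin 7))} :=
  ⟨![none, some ⟨4, by decide⟩, some ⟨5, by decide⟩],
   fun o => o.elim 0 (fun z => if (z : Fin 7) = 4 then 1 else 2), by decide, by decide⟩

private def gL46 : Fin 3 ≃ Option {x // x ∈ ({4,6} : Finset (Fin 7))} :=
  ⟨![none, some ⟨4, by decide⟩, some ⟨6, by decide⟩],
   fun o => o.elim 0 (fun z => if (z : Fin 7) = 4 then 1 else 2), by decide, by decide⟩

private def gL5 : Fin 2 ≃ Option {x // x ∈ ({5} : Finset (Fin 7))} :=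
  ⟨![none, some ⟨5, by decide⟩], fun o => o.elim 0 (fun _ => 1), by decide, by decide⟩

/-- a positive semidefinite matrix on indices
`∞x, ∞y, 0, 1, x, y, z` (here `0,1,2,3,4,5,6`) storing the standard projective
basis in its coordinate block and satisfying the CI statements `(ab|xyz)` for
all distinct basis points `a, b` (in the semidefinite sense, via any full-rank
subset `L` of `{x,y,z}`), while `Σ_{0,1} ≠ 0`, has an invertible `Σ_{xyz}`
block. -/
theorem semidefinite_coordinate_block_invertible
    (A : Matrix (Fin 7) (Fin 7) ℝ) (hpsd : A.PosSemidef)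
    -- coordinate block pattern: ∞x = (*,0,0), ∞y = (0,*,0), 0 = (0,0,*),
    -- 1 = (*,*,*)
    (h0x : A 0 4 ≠ 0) (h0y : A 0 5 = 0) (h0z : A 0 6 = 0)
    (h1x : A 1 4 = 0) (h1y : A 1 5 ≠ 0) (h1z : A 1 6 = 0)
    (h2x : A 2 4 = 0) (h2y : A 2 5 = 0) (h2z : A 2 6 ≠ 0)
    (h3x : A 3 4 ≠ 0) (h3y : A 3 5 ≠ 0) (h3z : A 3 6 ≠ 0)
    -- scalar products of the standard basis points, constraint (S):
    (h01 : A 0 1 = 0) (h02 : A 0 2 = 0) (h12 : A 1 2 = 0)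
    (h03 : A 0 3 ≠ 0) (h13 : A 1 3 ≠ 0) (h23 : A 2 3 ≠ 0)
    -- the CI statements (ab|xyz) hold for all distinct basis points, tested on
    -- any full-rank invertible subset L ⊆ {x,y,z}:
    (hCI : ∀ a b : Fin 7, a ∈ ({0, 1, 2, 3} : Finset (Fin 7)) →
        b ∈ ({0, 1, 2, 3} : Finset (Fin 7)) → a ≠ b →
        ∀ L : Finset (Fin 7), L ⊆ ({4, 5, 6} : Finset (Fin 7)) →
          (A.submatrix ((↑) : L → Fin 7) ((↑) : L → Fin 7)).det ≠ 0 →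
          (A.submatrix ((↑) : L → Fin 7) ((↑) : L → Fin 7)).rank
            = (A.submatrix ((↑) : ({4, 5, 6} : Finset (Fin 7)) → Fin 7)
                ((↑) : ({4, 5, 6} : Finset (Fin 7)) → Fin 7)).rank →
          (A.submatrix (fun o : Option L => o.elim a (↑·))
            (fun o : Option L => o.elim b (↑·))).det = 0) :
    (A.submatrix ![4, 5, 6] ![4, 5, 6]).det ≠ 0 := by
  intro hdet
  have hs : ∀ i j : Fin 7, A j i = A i j := fun i j => by
    have := congrFun (congrFun hpsd.1 i) j
    simpa using this
  have ha : A 4 4 ≠ 0 := fun h => h0x (psd_entry_zero hpsd h)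
  have hd : A 5 5 ≠ 0 := fun h => h1y (psd_entry_zero hpsd h)
  have hdet3 : A 4 4 * A 5 5 * A 6 6 - A 4 4 * A 5 6 ^ 2 - A 4 5 ^ 2 * A 6 6
      + 2 * A 4 5 * A 4 6 * A 5 6 - A 4 6 ^ 2 * A 5 5 = 0 := by
    have h := hdet
    rw [det_fin_three] at h
    simp only [submatrix_apply, cons_val_zero, cons_val_one, head_cons, cons_val_two, tail_cons,
      head_fin_const] at h
    linear_combination h + (A 4 5 * A 6 6 - A 4 6 * A 6 5) * hs 4 5
      + (A 4 6 * A 5 5 - A 4 5 * A 5 6) * hs 4 6 + (A 4 4 * A 5 6 - A 4 5 * A 4 6) * hs 5 6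
  -- common rank fact
  have hR3 : (A.submatrix ((↑) : ({4, 5, 6} : Finset (Fin 7)) → Fin 7)
      ((↑) : ({4, 5, 6} : Finset (Fin 7)) → Fin 7)).rank
      = (A.submatrix ![4,5,6] ![4,5,6]).rank := by
    rw [← rank_submatrix (A.submatrix _ _) eL3 eL3, submatrix_submatrix]
    have hc : (Subtype.val ∘ ⇑eL3 : Fin 3 → Fin 7) = ![4,5,6] := by
      funext i; fin_cases i <;> rfl
    rw [hc]
  have hrle : (A.submatrix ![4,5,6] ![4,5,6]).rank ≤ 2 := rank_le_of_det_eq_zero' hdet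
  by_cases hp45 : A 4 4 * A 5 5 - A 4 5 * A 4 5 = 0
  · by_cases hp46 : A 4 4 * A 6 6 - A 4 6 * A 4 6 = 0
    · -- rank one case, L = {5}, pair (0,3)
      have hae2 : (A 4 4 * A 5 6 - A 4 5 * A 4 6) ^ 2 = 0 := by
        linear_combination (A 4 4 * A 6 6 - A 4 6 * A 4 6) * hp45 - A 4 4 * hdet3
      have hae : A 4 4 * A 5 6 = A 4 5 * A 4 6 := by
        have := sq_eq_zero_iff.mp hae2; linarith
      have hM : A.submatrix ![4,5,6] ![4,5,6]
          = vecMulVec ![A 4 4, A 4 5, A 4 6] ![1, A 4 5 / A 4 4, A 4 6 / A 4 4] := by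
        ext i j
        fin_cases i <;> fin_cases j <;> simp [vecMulVec_apply]
        · field_simp
        · field_simp
        · exact hs 4 5
        · field_simp; linear_combination hp45
        · field_simp; linear_combination hae
        · exact hs 4 6
        · field_simp; linear_combination A 4 4 * hs 5 6 + hae
        · field_simp; linear_combination hp46
      have hrank1 : (A.submatrix ![4,5,6] ![4,5,6]).rank ≤ 1 := by
        rw [hM, vecMulVec_eq (Fin 1)]
        exact (rank_mul_le_left _ _).trans ((rank_le_card_width _).trans (by simp))
      have hrankge : 1 ≤ (A.submatrix ![4,5,6] ![4,5,6]).rank :=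
        rank_pos_of_ne' (show (A.submatrix ![4,5,6] ![4,5,6]) 0 0 ≠ 0 by simpa using ha)
      have hrank : (A.submatrix ![4,5,6] ![4,5,6]).rank = 1 := le_antisymm hrank1 hrankge
      have hdL : (A.submatrix ((↑) : ({5} : Finset (Fin 7)) → Fin 7)
          ((↑) : ({5} : Finset (Fin 7)) → Fin 7)).det = A 5 5 := by
        rw [← det_submatrix_equiv_self eL5, submatrix_submatrix]
        have hc : (Subtype.val ∘ ⇑eL5 : Fin 1 → Fin 7) = ![5] := by
          funext i; fin_cases i <;> rfl
        rw [hc, det_fin_one]; rfl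
      have hrL : (A.submatrix ((↑) : ({5} : Finset (Fin 7)) → Fin 7)
          ((↑) : ({5} : Finset (Fin 7)) → Fin 7)).rank
          = (A.submatrix ![5] ![5]).rank := by
        rw [← rank_submatrix (A.submatrix _ _) eL5 eL5, submatrix_submatrix]
        have hc : (Subtype.val ∘ ⇑eL5 : Fin 1 → Fin 7) = ![5] := by
          funext i; fin_cases i <;> rfl
        rw [hc]
      have hr1 : (A.submatrix ![5] ![5]).rank = 1 := by
        rw [rank_of_isUnit _ ((isUnit_iff_isUnit_det _).mpr (isUnit_iff_ne_zero.mpr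
          (show (A.submatrix ![5] ![5]).det ≠ 0 by rw [det_fin_one]; exact hd))),
          Fintype.card_fin]
      have hz := hCI 0 3 (by decide) (by decide) (by decide) {5} (by decide)
        (by rw [hdL]; exact hd) (by rw [hrL, hr1, hR3, hrank])
      rw [← det_submatrix_equiv_self gL5, submatrix_submatrix] at hz
      have hr : ((fun o : Option {x // x ∈ ({5} : Finset (Fin 7))} => o.elim ((0 : Fin 7)) (↑·)) ∘ ⇑gL5)
          = ![0,5] := by funext i; fin_cases i <;> rfl
      have hcc : ((fun o : Option {x // x ∈ ({5} : Finset (Fin 7))} => o.elim ((3 : Fin 7)) (↑·)) ∘ ⇑gL5)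
          = ![3,5] := by funext i; fin_cases i <;> rfl
      rw [hr, hcc, det_fin_two] at hz
      simp only [submatrix_apply, cons_val_zero, cons_val_one, head_cons, h0y] at hz
      rcases mul_eq_zero.mp (show A 0 3 * A 5 5 = 0 by linarith) with h | h
      · exact h03 h
      · exact hd h
    · -- L = {4,6}, pair (1,3)
      have hdL : (A.submatrix ((↑) : ({4,6} : Finset (Fin 7)) → Fin 7)
          ((↑) : ({4,6} : Finset (Fin 7)) → Fin 7)).det
          = (A.submatrix ![4,6] ![4,6]).det := by
        rw [← det_submatrix_equiv_self eL46, submatrix_submatrix]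
        have hc : (Subtype.val ∘ ⇑eL46 : Fin 2 → Fin 7) = ![4,6] := by
          funext i; fin_cases i <;> rfl
        rw [hc]
      have hd2 : (A.submatrix ![4,6] ![4,6]).det ≠ 0 := by
        rw [det_fin_two]
        simp only [submatrix_apply, cons_val_zero, cons_val_one, head_cons]
        intro h; exact hp46 (by linear_combination h + A 4 6 * hs 4 6)
      have hr2 : (A.submatrix ![4,6] ![4,6]).rank = 2 := by
        rw [rank_of_isUnit _ ((isUnit_iff_isUnit_det _).mpr (isUnit_iff_ne_zero.mpr hd2)),
          Fintype.card_fin]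
      have hrge : 2 ≤ (A.submatrix ![4,5,6] ![4,5,6]).rank := by
        have hle := rank_submatrix_le'' (A.submatrix ![4,5,6] ![4,5,6]) ![0,2]
        have hcc : (A.submatrix ![4,5,6] ![4,5,6]).submatrix ![0,2] ![0,2]
            = A.submatrix ![4,6] ![4,6] := by
          rw [submatrix_submatrix]
          have hc : (![4,5,6] ∘ ![0,2] : Fin 2 → Fin 7) = ![4,6] := by
            funext i; fin_cases i <;> rfl
          rw [hc]
        rw [hcc, hr2] at hle
        exact hle
      have hrank : (A.submatrix ![4,5,6] ![4,5,6]).rank = 2 := le_antisymm hrle hrge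
      have hrL : (A.submatrix ((↑) : ({4,6} : Finset (Fin 7)) → Fin 7)
          ((↑) : ({4,6} : Finset (Fin 7)) → Fin 7)).rank
          = (A.submatrix ![4,6] ![4,6]).rank := by
        rw [← rank_submatrix (A.submatrix _ _) eL46 eL46, submatrix_submatrix]
        have hc : (Subtype.val ∘ ⇑eL46 : Fin 2 → Fin 7) = ![4,6] := by
          funext i; fin_cases i <;> rfl
        rw [hc]
      have hz := hCI 1 3 (by decide) (by decide) (by decide) {4,6} (by decide)
        (by rw [hdL]; exact hd2) (by rw [hrL, hr2, hR3, hrank])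
      rw [← det_submatrix_equiv_self gL46, submatrix_submatrix] at hz
      have hr : ((fun o : Option {x // x ∈ ({4,6} : Finset (Fin 7))} => o.elim ((1 : Fin 7)) (↑·)) ∘ ⇑gL46)
          = ![1,4,6] := by funext i; fin_cases i <;> rfl
      have hcc : ((fun o : Option {x // x ∈ ({4,6} : Finset (Fin 7))} => o.elim ((3 : Fin 7)) (↑·)) ∘ ⇑gL46)
          = ![3,4,6] := by funext i; fin_cases i <;> rfl
      rw [hr, hcc, det_fin_three] at hz
      simp only [submatrix_apply, cons_val_zero, cons_val_one, head_cons, cons_val_two, tail_cons,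
        head_fin_const, h1x, h1z] at hz
      have : A 1 3 * (A 4 4 * A 6 6 - A 4 6 * A 4 6) = 0 := by
        linear_combination hz + (A 1 3 * A 4 6) * hs 4 6
      rcases mul_eq_zero.mp this with h | h
      · exact h13 h
      · exact hp46 h
  · -- L = {4,5}, pair (2,3)
    have hdL : (A.submatrix ((↑) : ({4,5} : Finset (Fin 7)) → Fin 7)
        ((↑) : ({4,5} : Finset (Fin 7)) → Fin 7)).det
        = (A.submatrix ![4,5] ![4,5]).det := by
      rw [← det_submatrix_equiv_self eL45, submatrix_submatrix]
      have hc : (Subtype.val ∘ ⇑eL45 : Fin 2 → Fin 7) = ![4,5] := by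
        funext i; fin_cases i <;> rfl
      rw [hc]
    have hd2 : (A.submatrix ![4,5] ![4,5]).det ≠ 0 := by
      rw [det_fin_two]
      simp only [submatrix_apply, cons_val_zero, cons_val_one, head_cons]
      intro h; exact hp45 (by linear_combination h + A 4 5 * hs 4 5)
    have hr2 : (A.submatrix ![4,5] ![4,5]).rank = 2 := by
      rw [rank_of_isUnit _ ((isUnit_iff_isUnit_det _).mpr (isUnit_iff_ne_zero.mpr hd2)),
        Fintype.card_fin]
    have hrge : 2 ≤ (A.submatrix ![4,5,6] ![4,5,6]).rank := by
      have hle := rank_submatrix_le'' (A.submatrix ![4,5,6] ![4,5,6]) ![0,1]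
      have hcc : (A.submatrix ![4,5,6] ![4,5,6]).submatrix ![0,1] ![0,1]
          = A.submatrix ![4,5] ![4,5] := by
        rw [submatrix_submatrix]
        have hc : (![4,5,6] ∘ ![0,1] : Fin 2 → Fin 7) = ![4,5] := by
          funext i; fin_cases i <;> rfl
        rw [hc]
      rw [hcc, hr2] at hle
      exact hle
    have hrank : (A.submatrix ![4,5,6] ![4,5,6]).rank = 2 := le_antisymm hrle hrge
    have hrL : (A.submatrix ((↑) : ({4,5} : Finset (Fin 7)) → Fin 7)
        ((↑) : ({4,5} : Finset (Fin 7)) → Fin 7)).rank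
        = (A.submatrix ![4,5] ![4,5]).rank := by
      rw [← rank_submatrix (A.submatrix _ _) eL45 eL45, submatrix_submatrix]
      have hc : (Subtype.val ∘ ⇑eL45 : Fin 2 → Fin 7) = ![4,5] := by
        funext i; fin_cases i <;> rfl
      rw [hc]
    have hz := hCI 2 3 (by decide) (by decide) (by decide) {4,5} (by decide)
      (by rw [hdL]; exact hd2) (by rw [hrL, hr2, hR3, hrank])
    rw [← det_submatrix_equiv_self gL45, submatrix_submatrix] at hz
    have hr : ((fun o : Option {x // x ∈ ({4,5} : Finset (Fin 7))} => o.elim ((2 : Fin 7)) (↑·)) ∘ ⇑gL45)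
        = ![2,4,5] := by funext i; fin_cases i <;> rfl
    have hcc : ((fun o : Option {x // x ∈ ({4,5} : Finset (Fin 7))} => o.elim ((3 : Fin 7)) (↑·)) ∘ ⇑gL45)
        = ![3,4,5] := by funext i; fin_cases i <;> rfl
    rw [hr, hcc, det_fin_three] at hz
    simp only [submatrix_apply, cons_val_zero, cons_val_one, head_cons, cons_val_two, tail_cons,
      head_fin_const, h2x, h2y] at hz
    have : A 2 3 * (A 4 4 * A 5 5 - A 4 5 * A 4 5) = 0 := by
      linear_combination hz + (A 2 3 * A 4 5) * hs 4 5
    rcases mul_eq_zero.mp this with h | h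
    · exact h23 h
    · exact hp45 h
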